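/- Let P be a nonempty compact convex subset of ℝⁿ, f, g : ℝⁿ → ℝ convex and continuously differentiable, F = f + g. Let (x_k) be a sequence in P converging to a point x̃ ∈ P that is not a minimizer of F over P, and for each k let s_k minimize u ↦ ⟨∇f(x_k), u − x_k⟩ + g(u) − g(x_k) over P. Then limsup_{k→∞} ⟨∇F(x_k), s_k − x_k⟩ ≤ inf_{s ∈ P} [⟨∇f(x̃), s − x̃⟩ + g(s) − g(x̃)] < 0. (The direction sequence is gradient related.) -/

import Mathlib

open RealInnerProductSpace

variable {E : Type*} [NormedAddCommGroup E] [InnerProductSpace ℝ E] [CompleteSpace E]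

lemma my_inner_gradient (h : E → ℝ) (x v : E) : ⟪gradient h x, v⟫ = fderiv ℝ h x v :=
  InnerProductSpace.toDual_symm_apply

lemma my_continuous_gradient {h : E → ℝ} (hh : ContDiff ℝ 1 h) : Continuous (gradient h) :=
  (InnerProductSpace.toDual ℝ E).symm.continuous.comp (hh.continuous_fderiv one_ne_zero)

lemma my_grad_ineq {h : E → ℝ} (hc : ConvexOn ℝ Set.univ h) (hd : Differentiable ℝ h)
    (x y : E) : ⟪gradient h x, y - x⟫ ≤ h y - h x := by
  rw [my_inner_gradient]
  set v := y - x with hv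
  have hline : HasDerivAt (fun t : ℝ => x + t • v) v 0 := by
    simpa using ((hasDerivAt_id (0 : ℝ)).smul_const v).const_add x
  have hq : HasDerivAt (fun t : ℝ => h (x + t • v)) (fderiv ℝ h x v) 0 := by
    have hx0 : HasFDerivAt h (fderiv ℝ h x) (x + (0:ℝ) • v) := by
      simpa using (hd x).hasFDerivAt
    have := hx0.comp_hasDerivAt 0 hline
    exact this
  have hqc : ConvexOn ℝ Set.univ (fun t : ℝ => h (x + t • v)) := by
    have H := hc.comp_affineMap (AffineMap.lineMap x y : ℝ →ᵃ[ℝ] E)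
    have heq : (h ∘ (AffineMap.lineMap x y : ℝ →ᵃ[ℝ] E)) = fun t : ℝ => h (x + t • v) := by
      funext t
      simp [AffineMap.lineMap_apply, hv, add_comm]
    rw [heq, Set.preimage_univ] at H
    exact H
  have hle := hqc.le_slope_of_hasDerivAt (Set.mem_univ (0 : ℝ)) (Set.mem_univ (1 : ℝ))
    one_pos hq
  have : slope (fun t : ℝ => h (x + t • v)) 0 1 = h y - h x := by
    simp [slope, hv]
  rwa [this] at hle

theorem stmt_9 (n : ℕ) (P : Set (EuclideanSpace ℝ (Fin n)))
    (hPne : P.Nonempty) (hPcpt : IsCompact P) (hPconv : Convex ℝ P)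
    (f g : EuclideanSpace ℝ (Fin n) → ℝ)
    (hfconv : ConvexOn ℝ Set.univ f) (hgconv : ConvexOn ℝ Set.univ g)
    (hf : ContDiff ℝ 1 f) (hg : ContDiff ℝ 1 g)
    (x : ℕ → EuclideanSpace ℝ (Fin n)) (hxP : ∀ k, x k ∈ P)
    (xt : EuclideanSpace ℝ (Fin n)) (hxt : xt ∈ P)
    (hconv : Filter.Tendsto x Filter.atTop (nhds xt))
    (hnotmin : ¬ IsMinOn (fun y => f y + g y) P xt)
    (s : ℕ → EuclideanSpace ℝ (Fin n)) (hsP : ∀ k, s k ∈ P)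
    (hsmin : ∀ k, IsMinOn (fun u => ⟪gradient f (x k), u - x k⟫ + g u - g (x k)) P (s k)) :
    Filter.limsup (fun k => ⟪gradient (fun y => f y + g y) (x k), s k - x k⟫) Filter.atTop ≤
        (⨅ u : P, ⟪gradient f xt, (u : EuclideanSpace ℝ (Fin n)) - xt⟫ + g u - g xt) ∧
      (⨅ u : P, ⟪gradient f xt, (u : EuclideanSpace ℝ (Fin n)) - xt⟫ + g u - g xt) < 0 := by
  haveI : Nonempty P := hPne.to_subtype
  set F : EuclideanSpace ℝ (Fin n) → ℝ := fun y => f y + g y with hFdef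
  have hfd : Differentiable ℝ f := hf.differentiable one_ne_zero
  have hgd : Differentiable ℝ g := hg.differentiable one_ne_zero
  have hF : ContDiff ℝ 1 F := hf.add hg
  -- gradient of sum
  have hgradF : ∀ z : EuclideanSpace ℝ (Fin n), gradient F z = gradient f z + gradient g z := by
    intro z
    show (InnerProductSpace.toDual ℝ (EuclideanSpace ℝ (Fin n))).symm (fderiv ℝ F z) = _
    rw [hFdef, fderiv_fun_add (hfd z) (hgd z), map_add]
    rfl
  -- the data sequence
  set h : ℕ → ℝ := fun k => ⟪gradient F (x k), s k - x k⟫ with hhdef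
  -- uniform lower bound for h
  obtain ⟨zC, _, hzC⟩ := hPcpt.exists_isMaxOn hPne
    ((my_continuous_gradient hF).norm.continuousOn)
  obtain ⟨zR, _, hzR⟩ := hPcpt.exists_isMaxOn hPne continuous_norm.continuousOn
  have hlow : ∀ k, -(‖gradient F zC‖ * (‖zR‖ + ‖zR‖)) ≤ h k := by
    intro k
    have h1 : |h k| ≤ ‖gradient F (x k)‖ * ‖s k - x k‖ := abs_real_inner_le_norm _ _
    have h2 : ‖gradient F (x k)‖ ≤ ‖gradient F zC‖ := hzC (hxP k)
    have h3 : ‖s k - x k‖ ≤ ‖zR‖ + ‖zR‖ := by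
      calc ‖s k - x k‖ ≤ ‖s k‖ + ‖x k‖ := norm_sub_le _ _
        _ ≤ ‖zR‖ + ‖zR‖ := add_le_add (hzR (hsP k)) (hzR (hxP k))
    have h4 : ‖gradient F (x k)‖ * ‖s k - x k‖ ≤ ‖gradient F zC‖ * (‖zR‖ + ‖zR‖) :=
      mul_le_mul h2 h3 (norm_nonneg _) (norm_nonneg _)
    have := (abs_le.mp (h1.trans h4)).1
    linarith
  have hcob : Filter.IsCoboundedUnder (· ≤ ·) Filter.atTop h :=
    Filter.isCoboundedUnder_le_of_le Filter.atTop hlow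
  -- key pointwise inequality
  have hkey : ∀ u ∈ P, ∀ k,
      h k ≤ ⟪gradient f (x k), u - x k⟫ + g u - g (x k) := by
    intro u hu k
    have e1 : h k = ⟪gradient f (x k), s k - x k⟫ + ⟪gradient g (x k), s k - x k⟫ := by
      rw [hhdef]; simp only [hgradF (x k), inner_add_left]
    have e2 : ⟪gradient g (x k), s k - x k⟫ ≤ g (s k) - g (x k) :=
      my_grad_ineq hgconv hgd _ _
    have e3 : ⟪gradient f (x k), s k - x k⟫ + g (s k) - g (x k) ≤
        ⟪gradient f (x k), u - x k⟫ + g u - g (x k) := (hsmin k) hu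
    linarith
  -- the limsup bound for each fixed u in P
  have hmain : ∀ u : P, Filter.limsup h Filter.atTop ≤
      ⟪gradient f xt, (u : EuclideanSpace ℝ (Fin n)) - xt⟫ + g u - g xt := by
    intro ⟨u, hu⟩
    have hψ : Continuous (fun z : EuclideanSpace ℝ (Fin n) => ⟪gradient f z, u - z⟫ + g u - g z) :=
      (((my_continuous_gradient hf).inner (continuous_const.sub continuous_id)).add
        continuous_const).sub hg.continuous
    have hv : Filter.Tendsto (fun k => ⟪gradient f (x k), u - x k⟫ + g u - g (x k))
        Filter.atTop (nhds (⟪gradient f xt, u - xt⟫ + g u - g xt)) :=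
      (hψ.tendsto xt).comp hconv
    calc Filter.limsup h Filter.atTop
        ≤ Filter.limsup (fun k => ⟪gradient f (x k), u - x k⟫ + g u - g (x k))
            Filter.atTop :=
          Filter.limsup_le_limsup (Filter.Eventually.of_forall (hkey u hu)) hcob
            hv.isBoundedUnder_le
      _ = ⟪gradient f xt, u - xt⟫ + g u - g xt := hv.limsup_eq
  constructor
  · exact le_ciInf hmain
  · -- inf < 0
    obtain ⟨y, hyP, hy⟩ : ∃ y ∈ P, F y < F xt := by
      by_contra hcon
      push_neg at hcon
      exact hnotmin fun y hy => hcon y hy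
    have hχ : Continuous (fun u : EuclideanSpace ℝ (Fin n) => ⟪gradient f xt, u - xt⟫ + g u - g xt) :=
      ((continuous_const.inner (continuous_id.sub continuous_const)).add
        hg.continuous).sub continuous_const
    have hbdd : BddBelow (Set.range fun u : P =>
        ⟪gradient f xt, (u : EuclideanSpace ℝ (Fin n)) - xt⟫ + g u - g xt) := by
      obtain ⟨m, hmP, hm⟩ := hPcpt.exists_isMinOn hPne hχ.continuousOn
      refine ⟨⟪gradient f xt, m - xt⟫ + g m - g xt, ?_⟩
      rintro r ⟨u, rfl⟩
      exact hm u.2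
    have hvy : ⟪gradient f xt, y - xt⟫ + g y - g xt < 0 := by
      have := my_grad_ineq hfconv hfd xt y
      have hFy : f y + g y < f xt + g xt := hy
      linarith
    exact lt_of_le_of_lt (ciInf_le hbdd ⟨y, hyP⟩) hvy
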